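/- Let R be a ring, n ≥ 1 an integer, and 𝒳 a class of left R-modules. If {G_i}_{i∈J} is a family of Gorenstein n-𝒳-flat right R-modules, then the direct sum ⊕_{i∈J} G_i is a Gorenstein n-𝒳-flat right R-module. -/

import Mathlib

/- Common framework: `n`-presented modules, syzygies, special 𝒳-presented modules,
   Ext/Tor vanishing (Tor via a hand-rolled tensor product over a possibly
   noncommutative ring, since Mathlib's tensor product requires commutativity),
   `n`-𝒳-injective / `n`-𝒳-flat modules, and the Gorenstein versions. -/

universe u
open CategoryTheory LinearMap DirectSum

section Basic

variable (R : Type u) [Ring R]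

/-- `U` is an `n`-presented left `R`-module: there is an exact sequence
`F_n → ⋯ → F_0 → U → 0` with each `F_i` finitely generated free. -/
def IsNPresented : ℕ → ModuleCat.{u} R → Prop
  | 0, U => Module.Finite R U
  | n + 1, U => ∃ (F : ModuleCat.{u} R) (f : F →ₗ[R] U),
      Module.Free R F ∧ Module.Finite R F ∧ Function.Surjective f ∧
      IsNPresented n (ModuleCat.of R (LinearMap.ker f))

/-- `K` is a `j`-th syzygy of `U` computed from finitely generated free modules:
`IsSyzygy 0 U K` iff `K ≅ U`, and a `(j+1)`-st syzygy of `U` is a `j`-th syzygy of the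
kernel of a surjection from a finitely generated free module onto `U`. -/
def IsSyzygy : ℕ → ModuleCat.{u} R → ModuleCat.{u} R → Prop
  | 0, U, K => Nonempty (K ≃ₗ[R] U)
  | j + 1, U, K => ∃ (F : ModuleCat.{u} R) (f : F →ₗ[R] U),
      Module.Free R F ∧ Module.Finite R F ∧ Function.Surjective f ∧
      IsSyzygy j (ModuleCat.of R (LinearMap.ker f)) K

/-- `Ext_R^k(U, M) = 0`. -/
noncomputable def ExtVanishes (k : ℕ) (U M : ModuleCat.{u} R) : Prop :=
  Subsingleton (((Ext ℤ (ModuleCat.{u} R) k).obj (Opposite.op U)).obj M)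

variable (𝒳 : Set (ModuleCat.{u} R)) (n : ℕ)

/-- `K` is a special 𝒳-presented module: `K` is the image `K_{n-1} = Im(F_{n-1} → F_{n-2})`
arising from an `n`-presentation of some `U ∈ 𝒳` (with the convention `K = U` when `n = 1`),
i.e. `K` is an `(n-1)`-st syzygy of some `n`-presented `U ∈ 𝒳`. -/
def IsSpecialPresented (K : ModuleCat.{u} R) : Prop :=
  ∃ U ∈ 𝒳, IsNPresented R n U ∧ IsSyzygy R (n - 1) U K

/-- `M` is an `n`-𝒳-injective left `R`-module: `Ext_R^n(U, M) = 0` for every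
`n`-presented `U ∈ 𝒳`. -/
noncomputable def IsNXInjective (M : ModuleCat.{u} R) : Prop :=
  ∀ U ∈ 𝒳, IsNPresented R n U → ExtVanishes R n U M

/-- Projective dimension at most `m`. -/
def ProjDimLE : ℕ → ModuleCat.{u} R → Prop
  | 0, K => Module.Projective R K
  | m + 1, K => ∃ (P : ModuleCat.{u} R) (f : P →ₗ[R] K),
      Module.Projective R P ∧ Function.Surjective f ∧
      ProjDimLE m (ModuleCat.of R (LinearMap.ker f))

/-- Finite projective dimension. -/
def HasFiniteProjDim (K : ModuleCat.{u} R) : Prop := ∃ m, ProjDimLE R m K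

/-- `R` is left `n`-𝒳-coherent: every `n`-presented module in `𝒳` is `(n+1)`-presented. -/
def IsNXCoherent : Prop := ∀ U ∈ 𝒳, IsNPresented R n U → IsNPresented R (n + 1) U

/-- `M` has `n`-𝒳-injective dimension at most `m`:
`Ext_R^{n+i}(U, M) = 0` for all `i ≥ m + 1` and all `n`-presented `U ∈ 𝒳`. -/
noncomputable def NXInjDimLE (m : ℕ) (M : ModuleCat.{u} R) : Prop :=
  ∀ U ∈ 𝒳, IsNPresented R n U → ∀ i : ℕ, m + 1 ≤ i → ExtVanishes R (n + i) U M

/-- `M` has finite `n`-𝒳-injective dimension. -/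
noncomputable def HasFiniteNXInjDim (M : ModuleCat.{u} R) : Prop := ∃ m, NXInjDimLE R 𝒳 n m M

end Basic

section Tensor

variable (R : Type u) [Ring R]

/-- The defining relations of the tensor product `N ⊗_R U` of a right `R`-module `N`
with a left `R`-module `U`, inside `N ⊗_ℤ U`. -/
def tensorRel (N : Type u) [AddCommGroup N] [Module Rᵐᵒᵖ N]
    (U : Type u) [AddCommGroup U] [Module R U] : Submodule ℤ (TensorProduct ℤ N U) :=
  Submodule.span ℤ {x | ∃ (r : R) (a : N) (v : U),
    x = (MulOpposite.op r • a) ⊗ₜ[ℤ] v - a ⊗ₜ[ℤ] (r • v)}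

/-- The tensor product `N ⊗_R U` of a right `R`-module `N` with a left `R`-module `U`
over a (possibly noncommutative) ring `R`, as an abelian group. -/
abbrev RTensor (N : Type u) [AddCommGroup N] [Module Rᵐᵒᵖ N]
    (U : Type u) [AddCommGroup U] [Module R U] : Type u :=
  TensorProduct ℤ N U ⧸ tensorRel R N U

/-- Functoriality of `RTensor` in both variables. -/
noncomputable def rtmap {N N' : Type u} [AddCommGroup N] [Module Rᵐᵒᵖ N]
    [AddCommGroup N'] [Module Rᵐᵒᵖ N']
    {U U' : Type u} [AddCommGroup U] [Module R U] [AddCommGroup U'] [Module R U']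
    (g : N →ₗ[Rᵐᵒᵖ] N') (f : U →ₗ[R] U') :
    RTensor R N U →ₗ[ℤ] RTensor R N' U' :=
  Submodule.mapQ (tensorRel R N U) (tensorRel R N' U')
    (TensorProduct.map g.toAddMonoidHom.toIntLinearMap f.toAddMonoidHom.toIntLinearMap)
    (by
      rw [tensorRel, Submodule.span_le]
      rintro x ⟨r, a, v, rfl⟩
      erw [SetLike.mem_coe, Submodule.mem_comap]
      erw [map_sub, TensorProduct.map_tmul, TensorProduct.map_tmul]
      apply Submodule.subset_span
      exact ⟨r, g a, f v, by simp [map_smul]⟩)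

/-- A left `R`-module `M` is flat if `- ⊗_R M` preserves injections of right `R`-modules. -/
noncomputable def IsFlatModule (M : ModuleCat.{u} R) : Prop :=
  ∀ (A B : ModuleCat.{u} Rᵐᵒᵖ) (i : A →ₗ[Rᵐᵒᵖ] B), Function.Injective i →
    Function.Injective (rtmap R i (LinearMap.id (M := M)))

/-- A right `R`-module `N` is flat if `N ⊗_R -` preserves injections of left `R`-modules. -/
noncomputable def IsFlatRight (N : ModuleCat.{u} Rᵐᵒᵖ) : Prop :=
  ∀ (A B : ModuleCat.{u} R) (i : A →ₗ[R] B), Function.Injective i →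
    Function.Injective (rtmap R (LinearMap.id (M := N)) i)

/-- Flat dimension of a left `R`-module at most `m`. -/
noncomputable def FlatDimLE : ℕ → ModuleCat.{u} R → Prop
  | 0, K => IsFlatModule R K
  | m + 1, K => ∃ (P : ModuleCat.{u} R) (f : P →ₗ[R] K),
      IsFlatModule R P ∧ Function.Surjective f ∧
      FlatDimLE m (ModuleCat.of R (LinearMap.ker f))

/-- Finite flat dimension. -/
noncomputable def HasFiniteFlatDim (K : ModuleCat.{u} R) : Prop := ∃ m, FlatDimLE R m K

variable (𝒳 : Set (ModuleCat.{u} R)) (n : ℕ)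

/-- `Tor^R_k(N, U) = 0` for a right `R`-module `N` and a left `R`-module `U`, `k ≥ 1`:
by dimension shifting this says that for every `(k-1)`-st syzygy `K` of `U` and every
surjection `f : F → K` with `F` free, the induced map `N ⊗ ker f → N ⊗ F` is injective. -/
noncomputable def TorVanishes (k : ℕ) (N : ModuleCat.{u} Rᵐᵒᵖ) (U : ModuleCat.{u} R) : Prop :=
  ∀ (K : ModuleCat.{u} R), IsSyzygy R (k - 1) U K →
    ∀ (F : ModuleCat.{u} R) (f : F →ₗ[R] K), Module.Free R F → Function.Surjective f →
      Function.Injective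
        (rtmap R (LinearMap.id (M := N)) (LinearMap.ker f).subtype)

/-- `N` is an `n`-𝒳-flat right `R`-module: `Tor^R_n(N, U) = 0` for every
`n`-presented `U ∈ 𝒳`. -/
noncomputable def IsNXFlat (N : ModuleCat.{u} Rᵐᵒᵖ) : Prop :=
  ∀ U ∈ 𝒳, IsNPresented R n U → TorVanishes R n N U

/-- `N` has `n`-𝒳-flat dimension at most `m`:
`Tor^R_{n+i}(N, U) = 0` for all `i ≥ m + 1` and all `n`-presented `U ∈ 𝒳`. -/
noncomputable def NXFlatDimLE (m : ℕ) (N : ModuleCat.{u} Rᵐᵒᵖ) : Prop :=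
  ∀ U ∈ 𝒳, IsNPresented R n U → ∀ i : ℕ, m + 1 ≤ i → TorVanishes R (n + i) N U

/-- `N` has finite `n`-𝒳-flat dimension. -/
noncomputable def HasFiniteNXFlatDim (N : ModuleCat.{u} Rᵐᵒᵖ) : Prop := ∃ m, NXFlatDimLE R 𝒳 n m N

end Tensor

section Pure

variable (R : Type u) [Ring R] (𝒳 : Set (ModuleCat.{u} R)) (n : ℕ)

/-- A short exact sequence `0 → A → B → C → 0` of left `R`-modules (given by `i` and `p`)
is special 𝒳-pure if `0 → Hom(K, A) → Hom(K, B) → Hom(K, C) → 0` is exact for every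
special 𝒳-presented module `K`. -/
def IsSpecialXPure {A B C : Type u} [AddCommGroup A] [Module R A] [AddCommGroup B] [Module R B]
    [AddCommGroup C] [Module R C] (i : A →ₗ[R] B) (p : B →ₗ[R] C) : Prop :=
  ∀ K : ModuleCat.{u} R, IsSpecialPresented R 𝒳 n K →
    Function.Injective (fun g : K →ₗ[R] A => i.comp g) ∧
    Function.Exact (fun g : K →ₗ[R] A => i.comp g) (fun g : K →ₗ[R] B => p.comp g) ∧
    Function.Surjective (fun g : K →ₗ[R] B => p.comp g)

/-- A short exact sequence `0 → A → B → C → 0` of right `R`-modules (given by `i` and `p`)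
is special 𝒳-pure if `0 → A ⊗ K → B ⊗ K → C ⊗ K → 0` is exact for every special
𝒳-presented (left `R`-) module `K`. -/
noncomputable def IsSpecialXPureRight {A B C : Type u}
    [AddCommGroup A] [Module Rᵐᵒᵖ A] [AddCommGroup B] [Module Rᵐᵒᵖ B]
    [AddCommGroup C] [Module Rᵐᵒᵖ C] (i : A →ₗ[Rᵐᵒᵖ] B) (p : B →ₗ[Rᵐᵒᵖ] C) : Prop :=
  ∀ K : ModuleCat.{u} R, IsSpecialPresented R 𝒳 n K →
    Function.Injective (rtmap R i (LinearMap.id (M := K))) ∧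
    Function.Exact (rtmap R i (LinearMap.id (M := K))) (rtmap R p (LinearMap.id (M := K))) ∧
    Function.Surjective (rtmap R p (LinearMap.id (M := K)))

/-- `R` is self left `n`-𝒳-injective. -/
noncomputable def IsSelfNXInjective : Prop := IsNXInjective R 𝒳 n (ModuleCat.of R R)

end Pure

section Gorenstein

variable (R : Type u) [Ring R] (𝒳 : Set (ModuleCat.{u} R)) (n : ℕ)

/-- `G` is a Gorenstein `n`-𝒳-injective left `R`-module: there is an exact complex
`⋯ → A_1 → A_0 → A^0 → A^1 → ⋯` of `n`-𝒳-injective modules with `G = ker(A^0 → A^1)`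
which stays exact under `Hom_R(K, -)` for every special 𝒳-presented `K` of finite
projective dimension. -/
noncomputable def IsGorNXInjective (G : ModuleCat.{u} R) : Prop :=
  ∃ (C : ℤ → ModuleCat.{u} R) (d : ∀ i : ℤ, C i →ₗ[R] C (i - 1)),
    (∀ i, IsNXInjective R 𝒳 n (C i)) ∧
    (∀ i : ℤ, Function.Exact (d i) (d (i - 1))) ∧
    Nonempty (G ≃ₗ[R] LinearMap.ker (d 0)) ∧
    (∀ K : ModuleCat.{u} R, IsSpecialPresented R 𝒳 n K → HasFiniteProjDim R K →
      ∀ i : ℤ, Function.Exact (fun g : K →ₗ[R] C i => (d i).comp g)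
        (fun g : K →ₗ[R] C (i - 1) => (d (i - 1)).comp g))

/-- `G` is a Gorenstein `n`-𝒳-flat right `R`-module: there is an exact complex
`⋯ → F_1 → F_0 → F^0 → F^1 → ⋯` of `n`-𝒳-flat right modules with `G = ker(F^0 → F^1)`
which stays exact under `- ⊗_R K` for every special 𝒳-presented `K` of finite
flat dimension. -/
noncomputable def IsGorNXFlat (G : ModuleCat.{u} Rᵐᵒᵖ) : Prop :=
  ∃ (C : ℤ → ModuleCat.{u} Rᵐᵒᵖ) (d : ∀ i : ℤ, C i →ₗ[Rᵐᵒᵖ] C (i - 1)),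
    (∀ i, IsNXFlat R 𝒳 n (C i)) ∧
    (∀ i : ℤ, Function.Exact (d i) (d (i - 1))) ∧
    Nonempty (G ≃ₗ[Rᵐᵒᵖ] LinearMap.ker (d 0)) ∧
    (∀ K : ModuleCat.{u} R, IsSpecialPresented R 𝒳 n K → HasFiniteFlatDim R K →
      ∀ i : ℤ, Function.Exact (rtmap R (d i) (LinearMap.id (M := K)))
        (rtmap R (d (i - 1)) (LinearMap.id (M := K))))

end Gorenstein

section GorensteinAbsolute

/-- `G` is a Gorenstein injective module over `S`: there is an exact complex of injective
modules with `G = ker(E^0 → E^1)` which stays exact under `Hom(I, -)` for every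
injective module `I`. -/
noncomputable def IsGorensteinInjective (S : Type u) [Ring S] (G : ModuleCat.{u} S) : Prop :=
  ∃ (C : ℤ → ModuleCat.{u} S) (d : ∀ i : ℤ, C i →ₗ[S] C (i - 1)),
    (∀ i, Module.Injective S (C i)) ∧
    (∀ i : ℤ, Function.Exact (d i) (d (i - 1))) ∧
    Nonempty (G ≃ₗ[S] LinearMap.ker (d 0)) ∧
    (∀ I : ModuleCat.{u} S, Module.Injective S I →
      ∀ i : ℤ, Function.Exact (fun g : I →ₗ[S] C i => (d i).comp g)
        (fun g : I →ₗ[S] C (i - 1) => (d (i - 1)).comp g))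

/-- `G` is a Gorenstein projective module over `S`: there is an exact complex of projective
modules with `G = ker(P^0 → P^1)` which stays exact under `Hom(-, Q)` for every
projective module `Q`. -/
def IsGorensteinProjective (S : Type u) [Ring S] (G : ModuleCat.{u} S) : Prop :=
  ∃ (C : ℤ → ModuleCat.{u} S) (d : ∀ i : ℤ, C i →ₗ[S] C (i - 1)),
    (∀ i, Module.Projective S (C i)) ∧
    (∀ i : ℤ, Function.Exact (d i) (d (i - 1))) ∧
    Nonempty (G ≃ₗ[S] LinearMap.ker (d 0)) ∧
    (∀ Q : ModuleCat.{u} S, Module.Projective S Q →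
      ∀ i : ℤ, Function.Exact (fun g : C (i - 1 - 1) →ₗ[S] Q => g.comp (d (i - 1)))
        (fun g : C (i - 1) →ₗ[S] Q => g.comp (d i)))

variable (R : Type u) [Ring R]

/-- `G` is a Gorenstein flat left `R`-module: there is an exact complex of flat left modules
with `G = ker(F^0 → F^1)` which stays exact under `E ⊗_R -` for every injective right
`R`-module `E`. -/
noncomputable def IsGorensteinFlatLeft (G : ModuleCat.{u} R) : Prop :=
  ∃ (C : ℤ → ModuleCat.{u} R) (d : ∀ i : ℤ, C i →ₗ[R] C (i - 1)),
    (∀ i, IsFlatModule R (C i)) ∧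
    (∀ i : ℤ, Function.Exact (d i) (d (i - 1))) ∧
    Nonempty (G ≃ₗ[R] LinearMap.ker (d 0)) ∧
    (∀ E : ModuleCat.{u} Rᵐᵒᵖ, Module.Injective Rᵐᵒᵖ E →
      ∀ i : ℤ, Function.Exact (rtmap R (LinearMap.id (M := E)) (d i))
        (rtmap R (LinearMap.id (M := E)) (d (i - 1))))

/-- `G` is a Gorenstein flat right `R`-module: there is an exact complex of flat right modules
with `G = ker(F^0 → F^1)` which stays exact under `- ⊗_R E` for every injective left
`R`-module `E`. -/
noncomputable def IsGorensteinFlatRight (G : ModuleCat.{u} Rᵐᵒᵖ) : Prop :=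
  ∃ (C : ℤ → ModuleCat.{u} Rᵐᵒᵖ) (d : ∀ i : ℤ, C i →ₗ[Rᵐᵒᵖ] C (i - 1)),
    (∀ i, IsFlatRight R (C i)) ∧
    (∀ i : ℤ, Function.Exact (d i) (d (i - 1))) ∧
    Nonempty (G ≃ₗ[Rᵐᵒᵖ] LinearMap.ker (d 0)) ∧
    (∀ E : ModuleCat.{u} R, Module.Injective R E →
      ∀ i : ℤ, Function.Exact (rtmap R (d i) (LinearMap.id (M := E)))
        (rtmap R (d (i - 1)) (LinearMap.id (M := E))))

end GorensteinAbsolute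

section DSAux
open DirectSum

variable (S : Type*) [Ring S] {J : Type*} [DecidableEq J]
variable (N N' N'' : J → Type*) [∀ j, AddCommGroup (N j)] [∀ j, Module S (N j)]
  [∀ j, AddCommGroup (N' j)] [∀ j, Module S (N' j)]
  [∀ j, AddCommGroup (N'' j)] [∀ j, Module S (N'' j)]

/-- Direct sum of a family of linear maps. -/
def dsMap (g : ∀ j, N j →ₗ[S] N' j) : (⨁ j, N j) →ₗ[S] ⨁ j, N' j :=
  DFinsupp.mapRange.linearMap g

theorem dsMap_apply (g : ∀ j, N j →ₗ[S] N' j) (x : ⨁ j, N j) (j : J) :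
    dsMap S N N' g x j = g j (x j) :=
  DFinsupp.mapRange_apply _ (fun i => map_zero (g i)) x j

theorem dsMap_of (g : ∀ j, N j →ₗ[S] N' j) (j : J) (a : N j) :
    dsMap S N N' g (DirectSum.of N j a) = DirectSum.of N' j (g j a) := by
  apply DFinsupp.ext; intro i
  rw [dsMap_apply]
  by_cases h : i = j
  · subst h; rw [DirectSum.of_eq_same, DirectSum.of_eq_same]
  · rw [DirectSum.of_eq_of_ne _ _ _ h, DirectSum.of_eq_of_ne _ _ _ h, map_zero]

theorem dsMap_id : dsMap S N N (fun _ => LinearMap.id) = LinearMap.id := by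
  apply LinearMap.ext; intro x; apply DFinsupp.ext; intro i; rw [dsMap_apply]; rfl

theorem dsMap_injective (g : ∀ j, N j →ₗ[S] N' j) (hg : ∀ j, Function.Injective (g j)) :
    Function.Injective (dsMap S N N' g) := by
  intro x y h
  apply DFinsupp.ext; intro i
  apply hg i
  rw [← dsMap_apply, ← dsMap_apply, h]

theorem dsMap_exact (g : ∀ j, N j →ₗ[S] N' j) (g' : ∀ j, N' j →ₗ[S] N'' j)
    (h : ∀ j, Function.Exact (g j) (g' j)) :
    Function.Exact (dsMap S N N' g) (dsMap S N' N'' g') := by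
  intro y
  constructor
  · intro hy
    have hy' : ∀ j, g' j (y j) = 0 := by
      intro j; rw [← dsMap_apply]; rw [hy]; rfl
    have hr : ∀ j, ∃ a : N j, g j a = y j := fun j => (h j (y j)).mp (hy' j)
    classical
    refine ⟨DFinsupp.mk y.support (fun j => Classical.choose (hr j)), ?_⟩
    apply DFinsupp.ext; intro i
    rw [dsMap_apply, DFinsupp.mk_apply]
    by_cases hi : i ∈ y.support
    · rw [dif_pos hi]; exact Classical.choose_spec (hr i)
    · rw [dif_neg hi, map_zero]
      exact (DFinsupp.notMem_support_iff.mp hi).symm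
  · rintro ⟨x, rfl⟩
    apply DFinsupp.ext; intro i
    rw [dsMap_apply, dsMap_apply]
    exact (h i).apply_apply_eq_zero (x i)

/-- Direct sum of a family of kernels is the kernel of the direct sum map. -/
noncomputable def dsKerEquiv (g : ∀ j, N j →ₗ[S] N' j) :
    (⨁ j, LinearMap.ker (g j)) ≃ₗ[S] LinearMap.ker (dsMap S N N' g) := by
  have hmem : ∀ x : ⨁ j, LinearMap.ker (g j),
      dsMap S _ _ (fun j => (LinearMap.ker (g j)).subtype) x ∈ LinearMap.ker (dsMap S N N' g) := by
    intro x
    rw [LinearMap.mem_ker]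
    apply DFinsupp.ext; intro i
    rw [dsMap_apply, dsMap_apply]
    exact (x i).2
  apply LinearEquiv.ofBijective
    (LinearMap.codRestrict _ (dsMap S _ _ (fun j => (LinearMap.ker (g j)).subtype)) hmem)
  constructor
  · intro x y h
    have := congrArg Subtype.val h
    exact dsMap_injective S _ _ _ (fun j => Subtype.val_injective) this
  · rintro ⟨y, hy⟩
    classical
    have hy' : ∀ j, y j ∈ LinearMap.ker (g j) := by
      intro j
      have : dsMap S N N' g y j = 0 := by rw [hy]; rfl
      rw [dsMap_apply] at this
      exact this
    refine ⟨DFinsupp.mk y.support (fun j => ⟨y j, hy' j⟩), ?_⟩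
    apply Subtype.ext
    apply DFinsupp.ext; intro i
    show dsMap S (fun j => LinearMap.ker (g j)) N (fun j => (LinearMap.ker (g j)).subtype) _ i = _
    rw [dsMap_apply, DFinsupp.mk_apply]
    by_cases hi : i ∈ y.support
    · rw [dif_pos hi]; rfl
    · rw [dif_neg hi]
      exact (DFinsupp.notMem_support_iff.mp hi).symm

/-- Direct sum of a family of linear equivalences. -/
noncomputable def dsEquiv (e : ∀ j, N j ≃ₗ[S] N' j) : (⨁ j, N j) ≃ₗ[S] ⨁ j, N' j :=
  LinearEquiv.ofLinear (dsMap S N N' (fun j => (e j).toLinearMap))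
    (dsMap S N' N (fun j => (e j).symm.toLinearMap))
    (by
      apply LinearMap.ext; intro x; apply DFinsupp.ext; intro i
      rw [LinearMap.comp_apply, dsMap_apply, dsMap_apply]
      exact (e i).apply_symm_apply (x i))
    (by
      apply LinearMap.ext; intro x; apply DFinsupp.ext; intro i
      rw [LinearMap.comp_apply, dsMap_apply, dsMap_apply]
      exact (e i).symm_apply_apply (x i))

end DSAux

section RTAux
open DirectSum

variable (R : Type u) [Ring R] {J : Type u} [DecidableEq J]
variable (N : J → Type u) [∀ j, AddCommGroup (N j)] [∀ j, Module Rᵐᵒᵖ (N j)]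
variable (U : Type u) [AddCommGroup U] [Module R U]

theorem rtmap_mk_tmul {A A' : Type u} [AddCommGroup A] [Module Rᵐᵒᵖ A]
    [AddCommGroup A'] [Module Rᵐᵒᵖ A'] {V V' : Type u} [AddCommGroup V] [Module R V]
    [AddCommGroup V'] [Module R V'] (g : A →ₗ[Rᵐᵒᵖ] A') (f : V →ₗ[R] V') (a : A) (v : V) :
    rtmap R g f (Submodule.Quotient.mk (a ⊗ₜ[ℤ] v)) =
      Submodule.Quotient.mk (g a ⊗ₜ[ℤ] f v) := by
  rw [rtmap]
  erw [Submodule.mapQ_apply, TensorProduct.map_tmul]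
  rfl

theorem rtensor_ext {A V M : Type u} [AddCommGroup A] [Module Rᵐᵒᵖ A]
    [AddCommGroup V] [Module R V] [AddCommMonoid M] [Module ℤ M]
    (F G : RTensor R A V →ₗ[ℤ] M)
    (h : ∀ a v, (F.comp (tensorRel R A V).mkQ) (a ⊗ₜ[ℤ] v) =
      (G.comp (tensorRel R A V).mkQ) (a ⊗ₜ[ℤ] v)) : F = G := by
  apply LinearMap.ext; intro y
  refine Submodule.Quotient.induction_on _ y ?_
  intro z
  induction z using TensorProduct.induction_on with
  | zero => rw [Submodule.Quotient.mk_zero, map_zero, map_zero]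
  | tmul a v => exact h a v
  | add a b ha hb => rw [Submodule.Quotient.mk_add, map_add, map_add, ha, hb]

/-- The forward map `(⨁ N) ⊗ U → ⨁ (N j ⊗ U)` before quotienting the domain. -/
noncomputable def rtPhiAux : TensorProduct ℤ (⨁ j, N j) U →ₗ[ℤ] ⨁ j, RTensor R (N j) U :=
  TensorProduct.lift (DirectSum.toModule ℤ J _ fun j =>
    LinearMap.compr₂ (TensorProduct.mk ℤ (N j) U)
      ((DirectSum.lof ℤ J (fun j => RTensor R (N j) U) j).comp (tensorRel R (N j) U).mkQ))

theorem rtPhiAux_of_tmul (j : J) (x : N j) (v : U) :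
    rtPhiAux R N U (DirectSum.of N j x ⊗ₜ[ℤ] v) =
      DirectSum.of (fun j => RTensor R (N j) U) j (Submodule.Quotient.mk (x ⊗ₜ[ℤ] v)) := by
  have h : (DirectSum.of N j x : ⨁ j, N j) = DirectSum.lof ℤ J N j x := rfl
  rw [h, rtPhiAux]
  erw [TensorProduct.lift.tmul, DirectSum.toModule_lof]
  rfl

theorem tensorRel_le_ker_rtPhiAux :
    tensorRel R (⨁ j, N j) U ≤ LinearMap.ker (rtPhiAux R N U) := by
  rw [tensorRel, Submodule.span_le]
  rintro _ ⟨r, a, v, rfl⟩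
  simp only [SetLike.mem_coe, LinearMap.mem_ker, map_sub, sub_eq_zero]
  induction a using DirectSum.induction_on with
  | zero => rw [smul_zero, TensorProduct.zero_tmul, TensorProduct.zero_tmul]
  | of j x =>
      have h1 : (MulOpposite.op r • DirectSum.of N j x) = DirectSum.of N j (MulOpposite.op r • x) := by
        apply DFinsupp.ext; intro i
        rw [DFinsupp.smul_apply]
        by_cases h : i = j
        · subst h; rw [DirectSum.of_eq_same, DirectSum.of_eq_same]
        · rw [DirectSum.of_eq_of_ne _ _ _ h, DirectSum.of_eq_of_ne _ _ _ h,
            smul_zero]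
      rw [h1, rtPhiAux_of_tmul, rtPhiAux_of_tmul]
      congr 1
      rw [Submodule.Quotient.eq]
      exact Submodule.subset_span ⟨r, x, v, rfl⟩
  | add a b ha hb =>
      rw [smul_add, TensorProduct.add_tmul, TensorProduct.add_tmul, map_add, map_add, ha, hb]

/-- `rtPhiAux` with the `ℤ`-module structure on the domain used by `tensorRel`. -/
noncomputable def rtPhiAuxZ : @LinearMap ℤ ℤ _ _ (RingHom.id ℤ) (TensorProduct ℤ (⨁ j, N j) U)
    (⨁ j, RTensor R (N j) U) _ _ (AddCommGroup.toIntModule _) _ :=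
  { toFun := rtPhiAux R N U
    map_add' := map_add (rtPhiAux R N U)
    map_smul' := fun c x => map_zsmul (rtPhiAux R N U) c x }

/-- `RTensor` distributes over direct sums: the forward map. -/
noncomputable def rtPhi : RTensor R (⨁ j, N j) U →ₗ[ℤ] ⨁ j, RTensor R (N j) U :=
  Submodule.liftQ (R := ℤ) (M := TensorProduct ℤ (⨁ j, N j) U) (R₂ := ℤ)
    (M₂ := ⨁ j, RTensor R (N j) U) (τ₁₂ := RingHom.id ℤ) (tensorRel R (⨁ j, N j) U)
    (rtPhiAuxZ R N U)
    (by
      intro x hx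
      have h0 : rtPhiAux R N U x = 0 := tensorRel_le_ker_rtPhiAux R N U hx
      exact (LinearMap.mem_ker (f := rtPhiAuxZ R N U)).mpr h0)

theorem rtPhi_mk_of_tmul (j : J) (x : N j) (v : U) :
    rtPhi R N U (Submodule.Quotient.mk (DirectSum.of N j x ⊗ₜ[ℤ] v)) =
      DirectSum.of (fun j => RTensor R (N j) U) j (Submodule.Quotient.mk (x ⊗ₜ[ℤ] v)) := by
  rw [rtPhi, Submodule.liftQ_apply]
  exact rtPhiAux_of_tmul R N U j x v

/-- `RTensor` distributes over direct sums: the backward map. -/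
noncomputable def rtPsi : (⨁ j, RTensor R (N j) U) →ₗ[ℤ] RTensor R (⨁ j, N j) U :=
  DirectSum.toModule ℤ J _ fun j => rtmap R (DirectSum.lof Rᵐᵒᵖ J N j) (LinearMap.id (M := U))

theorem rtPsi_of (j : J) (y : RTensor R (N j) U) :
    rtPsi R N U (DirectSum.of (fun j => RTensor R (N j) U) j y) =
      rtmap R (DirectSum.lof Rᵐᵒᵖ J N j) (LinearMap.id (M := U)) y := by
  have h : (DirectSum.of (fun j => RTensor R (N j) U) j y) =
      DirectSum.lof ℤ J (fun j => RTensor R (N j) U) j y := rfl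
  rw [h, rtPsi, DirectSum.toModule_lof]

theorem rtPhi_comp_rtPsi : (rtPhi R N U).comp (rtPsi R N U) = LinearMap.id := by
  apply DirectSum.linearMap_ext ℤ; intro j
  apply rtensor_ext
  intro x v
  rw [LinearMap.comp_apply, LinearMap.comp_apply, LinearMap.comp_apply]
  have h : (DirectSum.lof ℤ J (fun j => RTensor R (N j) U) j) ((tensorRel R (N j) U).mkQ (x ⊗ₜ[ℤ] v))
      = DirectSum.of (fun j => RTensor R (N j) U) j (Submodule.Quotient.mk (x ⊗ₜ[ℤ] v)) := rfl
  rw [h, rtPsi_of, rtmap_mk_tmul]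
  have h2 : (DirectSum.lof Rᵐᵒᵖ J N j) x = DirectSum.of N j x := rfl
  rw [h2]
  show rtPhi R N U (Submodule.Quotient.mk (DirectSum.of N j x ⊗ₜ[ℤ] (LinearMap.id (M := U) v))) = _
  rw [rtPhi_mk_of_tmul]
  rfl

theorem rtPsi_comp_rtPhi : (rtPsi R N U).comp (rtPhi R N U) = LinearMap.id := by
  apply rtensor_ext
  intro a v
  rw [LinearMap.comp_apply, LinearMap.comp_apply]
  induction a using DirectSum.induction_on with
  | zero =>
      rw [TensorProduct.zero_tmul]
      simp only [map_zero]
  | of j x =>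
      have h : (tensorRel R (⨁ j, N j) U).mkQ (DirectSum.of N j x ⊗ₜ[ℤ] v)
          = Submodule.Quotient.mk (DirectSum.of N j x ⊗ₜ[ℤ] v) := rfl
      rw [h, rtPhi_mk_of_tmul, rtPsi_of, rtmap_mk_tmul]
      rfl
  | add a b ha hb =>
      simp only [TensorProduct.add_tmul, map_add, ha, hb]

theorem rtPhi_injective : Function.Injective (rtPhi R N U) := by
  intro x y h
  have hx := LinearMap.congr_fun (rtPsi_comp_rtPhi R N U) x
  have hy := LinearMap.congr_fun (rtPsi_comp_rtPhi R N U) y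
  rw [LinearMap.comp_apply, LinearMap.id_apply] at hx hy
  rw [← hx, ← hy, h]

theorem rtPhi_surjective : Function.Surjective (rtPhi R N U) := by
  intro y
  refine ⟨rtPsi R N U y, ?_⟩
  exact LinearMap.congr_fun (rtPhi_comp_rtPsi R N U) y

theorem rtPsi_injective : Function.Injective (rtPsi R N U) := by
  intro x y h
  have hx := LinearMap.congr_fun (rtPhi_comp_rtPsi R N U) x
  have hy := LinearMap.congr_fun (rtPhi_comp_rtPsi R N U) y
  rw [LinearMap.comp_apply, LinearMap.id_apply] at hx hy
  rw [← hx, ← hy, h]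

theorem rtPhi_natural {N' : J → Type u} [∀ j, AddCommGroup (N' j)] [∀ j, Module Rᵐᵒᵖ (N' j)]
    {U' : Type u} [AddCommGroup U'] [Module R U']
    (g : ∀ j, N j →ₗ[Rᵐᵒᵖ] N' j) (f : U →ₗ[R] U') :
    (rtPhi R N' U').comp (rtmap R (dsMap Rᵐᵒᵖ N N' g) f) =
      (dsMap ℤ (fun j => RTensor R (N j) U) (fun j => RTensor R (N' j) U')
        (fun j => rtmap R (g j) f)).comp (rtPhi R N U) := by
  apply rtensor_ext
  intro a v
  rw [LinearMap.comp_apply, LinearMap.comp_apply, LinearMap.comp_apply, LinearMap.comp_apply]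
  induction a using DirectSum.induction_on with
  | zero =>
      rw [TensorProduct.zero_tmul]
      simp only [map_zero]
  | of j x =>
      have h : (tensorRel R (⨁ j, N j) U).mkQ (DirectSum.of N j x ⊗ₜ[ℤ] v)
          = Submodule.Quotient.mk (DirectSum.of N j x ⊗ₜ[ℤ] v) := rfl
      rw [h, rtmap_mk_tmul, dsMap_of, rtPhi_mk_of_tmul, rtPhi_mk_of_tmul, dsMap_of, rtmap_mk_tmul]
  | add a b ha hb =>
      simp only [TensorProduct.add_tmul, map_add, ha, hb]

theorem rtmap_dsMap_eq {N' : J → Type u} [∀ j, AddCommGroup (N' j)] [∀ j, Module Rᵐᵒᵖ (N' j)]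
    {U' : Type u} [AddCommGroup U'] [Module R U']
    (g : ∀ j, N j →ₗ[Rᵐᵒᵖ] N' j) (f : U →ₗ[R] U') :
    rtmap R (dsMap Rᵐᵒᵖ N N' g) f =
      (rtPsi R N' U').comp ((dsMap ℤ (fun j => RTensor R (N j) U)
        (fun j => RTensor R (N' j) U') (fun j => rtmap R (g j) f)).comp (rtPhi R N U)) := by
  have h := rtPhi_natural R N U g f
  calc rtmap R (dsMap Rᵐᵒᵖ N N' g) f
      = ((rtPsi R N' U').comp (rtPhi R N' U')).comp (rtmap R (dsMap Rᵐᵒᵖ N N' g) f) := by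
        rw [rtPsi_comp_rtPhi, LinearMap.id_comp]
    _ = (rtPsi R N' U').comp ((rtPhi R N' U').comp (rtmap R (dsMap Rᵐᵒᵖ N N' g) f)) := by
        rw [LinearMap.comp_assoc]
    _ = _ := by rw [h]

end RTAux

theorem exact_sandwich {A B C A' B' C' : Type u}
    [AddCommGroup A] [AddCommGroup B] [AddCommGroup C]
    [AddCommGroup A'] [AddCommGroup B'] [AddCommGroup C']
    (F : A →ₗ[ℤ] B) (G : B →ₗ[ℤ] C)
    (φA : A' →ₗ[ℤ] A) (hφA : Function.Surjective φA)
    (ψB : B →ₗ[ℤ] B') (φB : B' →ₗ[ℤ] B)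
    (hBB : ∀ b, φB (ψB b) = b) (hBB' : ∀ b', ψB (φB b') = b')
    (ψC : C →ₗ[ℤ] C') (hψC : Function.Injective ψC)
    (h : Function.Exact F G) :
    Function.Exact (ψB.comp (F.comp φA)) (ψC.comp (G.comp φB)) := by
  intro b'
  constructor
  · intro hb
    have h0 : G (φB b') = 0 := by
      apply hψC
      rw [map_zero]
      exact hb
    obtain ⟨a, ha⟩ := (h _).mp h0
    obtain ⟨a', rfl⟩ := hφA a
    refine ⟨a', ?_⟩
    rw [LinearMap.comp_apply, LinearMap.comp_apply, ha, hBB']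
  · rintro ⟨a', rfl⟩
    rw [LinearMap.comp_apply, LinearMap.comp_apply, LinearMap.comp_apply, LinearMap.comp_apply,
      hBB, h.apply_apply_eq_zero, map_zero]

set_option maxHeartbeats 4000000 in
/-- any direct sum of Gorenstein `n`-𝒳-flat right `R`-modules is Gorenstein
`n`-𝒳-flat. -/
theorem statement_11 (R : Type u) [Ring R] (𝒳 : Set (ModuleCat.{u} R)) (n : ℕ) (hn : 1 ≤ n)
    (J : Type u) (G : J → ModuleCat.{u} Rᵐᵒᵖ)
    (hG : ∀ i, IsGorNXFlat R 𝒳 n (G i)) :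
    IsGorNXFlat R 𝒳 n (ModuleCat.of Rᵐᵒᵖ (⨁ i, ↥(G i))) := by
  classical
  choose C d hflat hexact hker hpure using hG
  refine ⟨fun i => ModuleCat.of Rᵐᵒᵖ (⨁ j, ↥(C j i)),
    fun i => dsMap Rᵐᵒᵖ (fun j => ↥(C j i)) (fun j => ↥(C j (i - 1))) (fun j => d j i),
    ?_, ?_, ?_, ?_⟩
  · -- each term is n-𝒳-flat
    intro i U hU hUp K hK F f hF hf
    have hid : (LinearMap.id (M := ⨁ j, ↥(C j i))) =
        dsMap Rᵐᵒᵖ (fun j => ↥(C j i)) (fun j => ↥(C j i)) (fun _ => LinearMap.id) :=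
      (dsMap_id Rᵐᵒᵖ (fun j => ↥(C j i))).symm
    have heq : rtmap R (LinearMap.id (M := ⨁ j, ↥(C j i))) (LinearMap.ker f).subtype =
        (rtPsi R (fun j => ↥(C j i)) F).comp
          ((dsMap ℤ (fun j => RTensor R (↥(C j i)) (LinearMap.ker f))
            (fun j => RTensor R (↥(C j i)) F)
            (fun j => rtmap R (LinearMap.id (M := ↥(C j i))) (LinearMap.ker f).subtype)).comp
          (rtPhi R (fun j => ↥(C j i)) (LinearMap.ker f))) := by
      rw [hid]
      exact rtmap_dsMap_eq R (fun j => ↥(C j i)) (LinearMap.ker f)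
        (fun _ => LinearMap.id) (LinearMap.ker f).subtype
    show Function.Injective (rtmap R (LinearMap.id (M := ⨁ j, ↥(C j i))) (LinearMap.ker f).subtype)
    rw [heq]
    simp only [LinearMap.coe_comp]
    exact (rtPsi_injective R (fun j => ↥(C j i)) F).comp
      ((dsMap_injective ℤ _ _ _
        (fun j => hflat j i U hU hUp K hK F f hF hf)).comp
        (rtPhi_injective R (fun j => ↥(C j i)) (LinearMap.ker f)))
  · -- the complex is exact
    intro i
    exact dsMap_exact Rᵐᵒᵖ _ _ _ _ _ (fun j => hexact j i)
  · -- the kernel is the direct sum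
    exact ⟨LinearEquiv.trans
      (dsEquiv Rᵐᵒᵖ (fun j => ↥(G j)) (fun j => ↥(LinearMap.ker (d j 0)))
        (fun j => (hker j).some))
      (dsKerEquiv Rᵐᵒᵖ (fun j => ↥(C j 0)) (fun j => ↥(C j (0 - 1))) (fun j => d j 0))⟩
  · -- tensoring with special modules preserves exactness
    intro K hK hfd i
    have heq1 := rtmap_dsMap_eq R (fun j => ↥(C j i)) K (fun j => d j i) (LinearMap.id (M := K))
    have heq2 := rtmap_dsMap_eq R (fun j => ↥(C j (i - 1))) K (fun j => d j (i - 1))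
      (LinearMap.id (M := K))
    rw [heq1, heq2]
    exact exact_sandwich _ _
      (rtPhi R (fun j => ↥(C j i)) K)
      (rtPhi_surjective R (fun j => ↥(C j i)) K)
      (rtPsi R (fun j => ↥(C j (i - 1))) K)
      (rtPhi R (fun j => ↥(C j (i - 1))) K)
      (fun b => LinearMap.congr_fun (rtPhi_comp_rtPsi R (fun j => ↥(C j (i - 1))) K) b)
      (fun b => LinearMap.congr_fun (rtPsi_comp_rtPhi R (fun j => ↥(C j (i - 1))) K) b)
      (rtPsi R (fun j => ↥(C j (i - 1 - 1))) K)
      (rtPsi_injective R (fun j => ↥(C j (i - 1 - 1))) K)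
      (dsMap_exact ℤ _ _ _ _ _ (fun j => hpure j K hK hfd i))
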